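/- The space of weightless reversible squares equals the space of weightless associated vertex-cross-sum matrices: R_n ∩ V_n = A_n ∩ V_n, where R_n is the set of matrices with the row/column reverse property, A_n = {M : M + JMJ = 0} with J the antidiagonal permutation matrix, and V_n is the set of matrices with the vertex cross sum property and total entry sum zero. Consequently A_n = (R_n ∩ V_n) ⊕ (A_n ∩ S_n), with S_n the semimagic matrices. -/

import Mathlib

noncomputable def antidiagJ (n : ℕ) : Matrix (Fin n) (Fin n) ℝ :=
  fun i j => if j = i.rev then 1 else 0

def PropR {n : ℕ} (M : Matrix (Fin n) (Fin n) ℝ) : Prop :=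
  (∀ i j k : Fin n, M i j + M i j.rev = M i k + M i k.rev) ∧
  (∀ i j k : Fin n, M i j + M i.rev j = M k j + M k.rev j)

def PropV {n : ℕ} (M : Matrix (Fin n) (Fin n) ℝ) : Prop :=
  (∀ i j k l : Fin n, M i j + M k l = M i l + M k j) ∧ ∑ i, ∑ j, M i j = 0

def PropA {n : ℕ} (M : Matrix (Fin n) (Fin n) ℝ) : Prop :=
  antidiagJ n * M * antidiagJ n = -M

def PropS {n : ℕ} (M : Matrix (Fin n) (Fin n) ℝ) : Prop :=
  ∃ w : ℝ, (∀ i, ∑ j, M i j = n * w) ∧ (∀ i, ∑ j, M j i = n * w)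

lemma JMJ_apply {n : ℕ} (M : Matrix (Fin n) (Fin n) ℝ) (i j : Fin n) :
    (antidiagJ n * M * antidiagJ n) i j = M i.rev j.rev := by
  have h : ∀ x : Fin n, (j = x.rev) = (x = j.rev) := fun x => by
    rw [eq_iff_iff]
    constructor
    · rintro rfl; simp
    · rintro rfl; simp
  simp [antidiagJ, Matrix.mul_apply, h]

lemma sum_rev {n : ℕ} (f : Fin n → ℝ) : ∑ i : Fin n, f i.rev = ∑ i, f i :=
  Fintype.sum_bijective Fin.rev Fin.rev_involutive.bijective
    (fun i : Fin n => f i.rev) f (fun _ => rfl)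

lemma propA_iff {n : ℕ} (M : Matrix (Fin n) (Fin n) ℝ) :
    PropA M ↔ ∀ i j : Fin n, M i.rev j.rev = -M i j := by
  constructor
  · intro h i j
    have := congrFun (congrFun h i) j
    rwa [JMJ_apply, Matrix.neg_apply] at this
  · intro h
    ext i j
    rw [JMJ_apply, Matrix.neg_apply, h]

theorem stmt_19 (n : ℕ) :
    (∀ M : Matrix (Fin n) (Fin n) ℝ, (PropR M ∧ PropV M) ↔ (PropA M ∧ PropV M)) ∧
    (∀ M : Matrix (Fin n) (Fin n) ℝ, (PropR M ∧ PropV M) → (PropA M ∧ PropS M) → M = 0) ∧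
    (∀ M : Matrix (Fin n) (Fin n) ℝ, PropA M →
      ∃ X Y : Matrix (Fin n) (Fin n) ℝ,
        (PropR X ∧ PropV X) ∧ (PropA Y ∧ PropS Y) ∧ M = X + Y) := by
  refine ⟨?_, ?_, ?_⟩
  · -- Part 1
    intro M
    constructor
    · rintro ⟨hR, hV⟩
      refine ⟨?_, hV⟩
      rw [propA_iff]
      obtain ⟨hc, hs⟩ := hV
      -- T(i,j) := M i j + M i.rev j.rev is constant
      have hT : ∀ i j k l : Fin n,
          M i j + M i.rev j.rev = M k l + M k.rev l.rev := by
        intro i j k l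
        have c1 := hc i j i.rev l
        have r1 := hR.1 i.rev j l
        have c2 := hc i.rev l k.rev l.rev
        have r2 := hR.2 i l k
        linarith
      intro i j
      have hn : (0:ℝ) < n := by exact_mod_cast i.pos
      have hsum : ∑ a : Fin n, ∑ b : Fin n, (M a b + M a.rev b.rev)
          = (n:ℝ) * n * (M i j + M i.rev j.rev) := by
        rw [Finset.sum_congr rfl (fun a _ => Finset.sum_congr rfl
          (fun b _ => hT a b i j))]
        simp only [Finset.sum_const, Finset.card_univ, Fintype.card_fin, nsmul_eq_mul]
        ring
      have hsum2 : ∑ a : Fin n, ∑ b : Fin n, (M a b + M a.rev b.rev) = 0 := by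
        have h1 : ∑ a : Fin n, ∑ b : Fin n, M a.rev b.rev = 0 := by
          rw [sum_rev (fun a : Fin n => ∑ b : Fin n, M a b.rev)]
          rw [Finset.sum_congr rfl (fun a _ => sum_rev (fun b => M a b))]
          exact hs
        calc ∑ a : Fin n, ∑ b : Fin n, (M a b + M a.rev b.rev)
            = (∑ a : Fin n, ∑ b : Fin n, M a b)
              + ∑ a : Fin n, ∑ b : Fin n, M a.rev b.rev := by
              rw [← Finset.sum_add_distrib]
              exact Finset.sum_congr rfl (fun a _ => Finset.sum_add_distrib)
          _ = 0 := by rw [hs, h1]; ring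
      have : M i j + M i.rev j.rev = 0 := by
        have := hsum.symm.trans hsum2
        have hne : (n:ℝ) * n ≠ 0 := by positivity
        exact (mul_eq_zero.mp this).resolve_left hne
      linarith
    · rintro ⟨hA, hV⟩
      rw [propA_iff] at hA
      refine ⟨⟨?_, ?_⟩, hV⟩
      · intro i j k
        have c := hV.1 i j.rev i.rev k.rev
        have h1 := hA i j
        have h2 := hA i k
        linarith
      · intro i j k
        have c := hV.1 i.rev j k.rev j.rev
        have h1 := hA i j
        have h2 := hA k j
        linarith
  · -- Part 2
    rintro M ⟨_, ⟨hc, hs⟩⟩ ⟨_, ⟨w, hrow, hcol⟩⟩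
    ext i j
    have hn : (0:ℝ) < n := by exact_mod_cast i.pos
    have hconst : ∀ a b : Fin n, M a b = M i j := by
      -- rows are equal
      have hr : ∀ a b l : Fin n, M a l = M b l := by
        intro a b l
        have h1 : ∑ jj : Fin n, (M a jj - M b jj) = 0 := by
          rw [Finset.sum_sub_distrib, hrow a, hrow b]; ring
        have h2 : ∑ jj : Fin n, (M a jj - M b jj) = n * (M a l - M b l) := by
          rw [Finset.sum_congr rfl (fun jj _ => by
            have := hc a jj b l; linarith : ∀ jj ∈ Finset.univ,
              M a jj - M b jj = M a l - M b l)]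
          simp; ring
        have := h2.symm.trans h1
        have : M a l - M b l = 0 := by
          rcases mul_eq_zero.mp this with h | h
          · exact absurd h (by positivity)
          · exact h
        linarith
      have hcl : ∀ a l m : Fin n, M a l = M a m := by
        intro a l m
        have h1 : ∑ ii : Fin n, (M ii l - M ii m) = 0 := by
          rw [Finset.sum_sub_distrib, hcol l, hcol m]; ring
        have h2 : ∑ ii : Fin n, (M ii l - M ii m) = n * (M a l - M a m) := by
          rw [Finset.sum_congr rfl (fun ii _ => by
            have := hc ii l a m; linarith : ∀ ii ∈ Finset.univ,
              M ii l - M ii m = M a l - M a m)]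
          simp; ring
        have := h2.symm.trans h1
        have : M a l - M a m = 0 := by
          rcases mul_eq_zero.mp this with h | h
          · exact absurd h (by positivity)
          · exact h
        linarith
      intro a b
      rw [hr a i b, hcl i b j]
    have htot : ∑ a : Fin n, ∑ b : Fin n, M a b = n * n * M i j := by
      rw [Finset.sum_congr rfl (fun a _ => Finset.sum_congr rfl
        (fun b _ => hconst a b))]
      simp only [Finset.sum_const, Finset.card_univ, Fintype.card_fin, nsmul_eq_mul]
      ring
    have := htot.symm.trans hs
    have h0 : M i j = 0 := by
      rcases mul_eq_zero.mp this with h | h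
      · exact absurd h (by positivity)
      · exact h
    simpa using h0
  · -- Part 3
    intro M hA
    rw [propA_iff] at hA
    rcases Nat.eq_zero_or_pos n with hn | hn
    · refine ⟨0, M, ⟨⟨fun i => absurd i.2 (by omega), fun i => absurd i.2 (by omega)⟩,
        ⟨fun i => absurd i.2 (by omega), by
          subst hn; simp [Finset.univ_eq_empty]⟩⟩,
        ⟨(propA_iff M).mpr hA, ⟨0, fun i => absurd i.2 (by omega),
          fun i => absurd i.2 (by omega)⟩⟩, (zero_add M).symm⟩
    have hnR : (0:ℝ) < n := by exact_mod_cast hn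
    set r : Fin n → ℝ := fun i => (∑ j, M i j) / n with hr
    set c : Fin n → ℝ := fun j => (∑ i, M i j) / n with hcdef
    -- total sum is zero
    have htot : ∑ a : Fin n, ∑ b : Fin n, M a b = 0 := by
      have h1 : ∑ a : Fin n, ∑ b : Fin n, M a.rev b.rev
          = ∑ a : Fin n, ∑ b : Fin n, M a b := by
        rw [sum_rev (fun a : Fin n => ∑ b : Fin n, M a b.rev)]
        exact Finset.sum_congr rfl (fun a _ => sum_rev (fun b => M a b))
      have h2 : ∑ a : Fin n, ∑ b : Fin n, M a.rev b.rev
          = -∑ a : Fin n, ∑ b : Fin n, M a b := by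
        rw [Finset.sum_congr rfl (fun a _ => Finset.sum_congr rfl
          (fun b _ => hA a b))]
        simp [Finset.sum_neg_distrib]
      have := h1.symm.trans h2
      linarith
    have hrrev : ∀ i : Fin n, r i.rev = -r i := by
      intro i
      have : ∑ j : Fin n, M i.rev j = -∑ j : Fin n, M i j := by
        rw [← sum_rev (fun j => M i.rev j)]
        rw [Finset.sum_congr rfl (fun j _ => hA i j)]
        simp
      simp only [hr, this, neg_div]
    have hcrev : ∀ j : Fin n, c j.rev = -c j := by
      intro j
      have : ∑ i : Fin n, M i j.rev = -∑ i : Fin n, M i j := by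
        rw [← sum_rev (fun i => M i j.rev)]
        rw [Finset.sum_congr rfl (fun i _ => hA i j)]
        simp
      simp only [hcdef, this, neg_div]
    have hsumr : ∑ i, r i = 0 := by
      simp only [hr, ← Finset.sum_div, htot, zero_div]
    have hsumc : ∑ j, c j = 0 := by
      have : ∑ j : Fin n, ∑ i : Fin n, M i j = 0 := by
        rw [Finset.sum_comm]; exact htot
      simp only [hcdef, ← Finset.sum_div, this, zero_div]
    have hrowM : ∀ i : Fin n, ∑ j, M i j = n * r i := by
      intro i; show ∑ j, M i j = n * ((∑ j, M i j) / n); field_simp [hnR.ne']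
    have hcolM : ∀ j : Fin n, ∑ i, M i j = n * c j := by
      intro j; show ∑ i, M i j = n * ((∑ i, M i j) / n); field_simp [hnR.ne']
    refine ⟨fun i j => r i + c j, fun i j => M i j - (r i + c j), ?_, ?_, ?_⟩
    · constructor
      · constructor
        · intro i j k
          show r i + c j + (r i + c j.rev) = r i + c k + (r i + c k.rev)
          linarith [hcrev j, hcrev k]
        · intro i j k
          show r i + c j + (r i.rev + c j) = r k + c j + (r k.rev + c j)
          linarith [hrrev i, hrrev k]
      · constructor
        · intro i j k l
          show r i + c j + (r k + c l) = r i + c l + (r k + c j)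
          ring
        · have : ∀ i : Fin n, ∑ j : Fin n, (r i + c j) = n * r i := by
            intro i
            rw [Finset.sum_add_distrib, hsumc]
            simp [mul_comm]
          rw [Finset.sum_congr rfl (fun i _ => this i)]
          rw [← Finset.mul_sum, hsumr, mul_zero]
    · constructor
      · refine (propA_iff _).mpr ?_
        intro i j
        show M i.rev j.rev - (r i.rev + c j.rev) = -(M i j - (r i + c j))
        have h1 := hA i j
        have h2 := hrrev i
        have h3 := hcrev j
        linarith
      · refine ⟨0, fun i => ?_, fun j => ?_⟩
        · rw [Finset.sum_sub_distrib, hrowM i, Finset.sum_add_distrib, hsumc]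
          simp [mul_comm]
        · rw [Finset.sum_sub_distrib, hcolM j, Finset.sum_add_distrib, hsumr]
          simp [mul_comm]
    · ext i j
      show M i j = (r i + c j) + (M i j - (r i + c j)); ring
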